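/- Let σ, κ be noncrossing partitions of [n]. Then: (a) σ is concordant with I_1(σ); (b) if σ is concordant with I_1(κ), then I_1(σ) ≤ I_1(κ) in dominance order, with equality only if σ = κ. Consequently, the square matrix over ℝ with rows and columns indexed by NC_n, whose (κ,σ)-entry is 1 if σ is concordant with I_1(κ) and 0 otherwise, is invertible. -/

import Mathlib

open Finset

noncomputable section
open scoped Classical

/-- The cyclic (clockwise) half-open interval `(a, b]` in `Fin m`. -/
def cIoc {m : ℕ} (a b : Fin m) : Finset (Fin m) :=
  univ.filter fun k => if a < b then a < k ∧ k ≤ b else a < k ∨ k ≤ b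

/-- The open cyclic (clockwise) arc from `a` to `b` in `Fin m`, excluding both endpoints. -/
def cIoo {m : ℕ} (a b : Fin m) : Finset (Fin m) :=
  univ.filter fun k => if a < b then a < k ∧ k < b else (a < k ∨ k < b) ∧ k ≠ a ∧ k ≠ b

/-- Set partitions of `[n] = Fin n`. -/
abbrev NCP (n : ℕ) := Finpartition (univ : Finset (Fin n))

/-- `a` and `b` lie in the same block of `σ`. -/
def sameBlock {n : ℕ} (σ : NCP n) (a b : Fin n) : Prop :=
  ∃ B ∈ σ.parts, a ∈ B ∧ b ∈ B

/-- `σ` is a noncrossing partition: there are no `a < b < c < d` with `a, c` in one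
block and `b, d` in a different block. -/
def IsNoncrossing {n : ℕ} (σ : NCP n) : Prop :=
  ∀ a b c d : Fin n, a < b → b < c → c < d →
    sameBlock σ a c → sameBlock σ b d → sameBlock σ a b

/-- The relation defining the dual (Kreweras complement) partition: `ĩ ~ j̃` iff no block
of `σ` meets both cyclic intervals `{(i+1), …, j}` and `{(j+1), …, i}`. -/
def dualRel {n : ℕ} (σ : NCP n) (i j : Fin n) : Prop :=
  i = j ∨ ¬ ∃ B ∈ σ.parts, (B ∩ cIoc i j).Nonempty ∧ (B ∩ cIoc j i).Nonempty

/-- The point `ī` of `[2n]` (0-based: `ī = 2i`). -/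
def bar {n : ℕ} (i : Fin n) : Fin (2*n) := ⟨2*(i:ℕ), by have := i.isLt; omega⟩

/-- The point `ĩ` of `[2n]` (0-based: `ĩ = 2i+1`). -/
def til {n : ℕ} (i : Fin n) : Fin (2*n) := ⟨2*(i:ℕ)+1, by have := i.isLt; omega⟩

/-- A matching (fixed-point-free involution) of `Fin m`. -/
def IsMatching {m : ℕ} (τ : Fin m → Fin m) : Prop :=
  Function.Involutive τ ∧ ∀ i, τ i ≠ i

/-- A noncrossing matching: there are no `a < b < c < d` with `τ a = c` and `τ b = d`. -/
def IsNCMatching {m : ℕ} (τ : Fin m → Fin m) : Prop :=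
  ¬ ∃ a b c d : Fin m, a < b ∧ b < c ∧ c < d ∧ τ a = c ∧ τ b = d

/-- `j` is the cyclic predecessor of `i` in the block of `σ` containing `i`
(`j = i` when `i` is a singleton). -/
def cyclicPred {n : ℕ} (σ : NCP n) (j i : Fin n) : Prop :=
  ∃ B ∈ σ.parts, i ∈ B ∧ j ∈ B ∧ ∀ x ∈ B, x ∉ cIoo j i

/-- `m` is the medial pairing of `σ`: it pairs `ī` (0-based `2i`) with `j̃` (0-based `2j+1`),
where `j` is the cyclic predecessor of `i` in its block. -/
def IsMedialOf {n : ℕ} (σ : NCP n) (m : Fin (2*n) → Fin (2*n)) : Prop :=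
  ∀ i j : Fin n, m (bar i) = til j ↔ cyclicPred σ j i

/-- The crossing number of a matching: the number of pairs `{a,b}` with
`a < b < τ a < τ b`. -/
def crossNum {m : ℕ} (τ : Fin m → Fin m) : ℕ :=
  ((univ : Finset (Fin m × Fin m)).filter fun p =>
    p.1 < p.2 ∧ p.2 < τ p.1 ∧ τ p.1 < τ p.2).card

/-- `a`, `b`, `c`, `d` are distinct and in cyclic order on `Fin m`. -/
def CyclicOrder4 {m : ℕ} (a b c d : Fin m) : Prop :=
  (a < b ∧ b < c ∧ c < d) ∨ (b < c ∧ c < d ∧ d < a) ∨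
  (c < d ∧ d < a ∧ a < b) ∨ (d < a ∧ a < b ∧ b < c)

/-- `τ` covers `τ'` in the uncrossing order. -/
def UncrossCover {m : ℕ} (τ' τ : Fin m → Fin m) : Prop :=
  IsMatching τ' ∧ IsMatching τ ∧
  ∃ a b c d : Fin m, CyclicOrder4 a b c d ∧ τ a = c ∧ τ b = d ∧
    (∀ x, x ≠ a → x ≠ b → x ≠ c → x ≠ d → τ' x = τ x) ∧
    ((τ' a = d ∧ τ' b = c ∧ ∀ x ∈ cIoo a b, τ x ∉ cIoo c d) ∨
     (τ' a = b ∧ τ' c = d ∧ ∀ x ∈ cIoo b c, τ x ∉ cIoo d a))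

/-- The uncrossing partial order on matchings: reflexive-transitive closure of covers. -/
def uncrossLE {m : ℕ} (τ' τ : Fin m → Fin m) : Prop :=
  Relation.ReflTransGen UncrossCover τ' τ

/-- An affine permutation of period `m`. -/
def IsAffinePerm (m : ℕ) (f : ℤ → ℤ) : Prop :=
  Function.Bijective f ∧ ∀ i : ℤ, f (i + m) = f i + m

/-- The length of an affine permutation of period `m`:
`#{(i,j) : 1 ≤ i ≤ m, i < j, f i > f j}`. -/
def affLen (m : ℕ) (f : ℤ → ℤ) : ℕ :=
  Set.ncard {p : ℤ × ℤ | 1 ≤ p.1 ∧ p.1 ≤ (m:ℤ) ∧ p.1 < p.2 ∧ f p.2 < f p.1}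

/-- The affine rank matrix `r_f(i,j) = #{a ≤ i : f a ≥ j}`. -/
def rankMat (f : ℤ → ℤ) (i j : ℤ) : ℕ :=
  Set.ncard {a : ℤ | a ≤ i ∧ j ≤ f a}

/-- Affine Bruhat order via rank matrices. -/
def bruhatLE (f g : ℤ → ℤ) : Prop := ∀ i j : ℤ, rankMat f i j ≤ rankMat g i j

/-- The sum `Σ_{i=1}^m (f i − i)`. -/
def windowSum (m : ℕ) (f : ℤ → ℤ) : ℤ :=
  ∑ i ∈ Finset.range m, (f ((i:ℤ)+1) - ((i:ℤ)+1))

/-- The affine permutation `g_τ` associated to a matching `τ` of `[2n]`: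
on `[2n]`, `g_τ i = τ i` if `τ i > i` and `g_τ i = τ i + 2n` if `τ i < i`,
extended periodically. -/
def gTau (n : ℕ) (τ : Fin (2*n) → Fin (2*n)) (i : ℤ) : ℤ :=
  if h : (i % ((2*n : ℕ) : ℤ)).toNat < 2*n then
    let r : Fin (2*n) := ⟨(i % ((2*n : ℕ) : ℤ)).toNat, h⟩
    (i - i % ((2*n : ℕ) : ℤ)) +
      (if r < τ r then ((τ r : ℕ) : ℤ) else ((τ r : ℕ) : ℤ) + 2*n)
  else i

/-- `f_τ = g_τ − 1`. -/
def fTau (n : ℕ) (τ : Fin (2*n) → Fin (2*n)) (i : ℤ) : ℤ := gTau n τ i - 1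

/-- An electrical affine permutation for `n`. -/
def IsElectrical (n : ℕ) (f : ℤ → ℤ) : Prop :=
  IsAffinePerm (2*n) f ∧
  (∀ i : ℤ, i ≤ f i ∧ f i ≤ i + 2*n - 2) ∧
  windowSum (2*n) f = ((n:ℤ) - 1) * (2*n) ∧
  ∀ i : ℤ, (f (f i + 1) - (i - 1)) % ((2*n : ℕ) : ℤ) = 0

/-- The Grassmann necklace subset `I_a(f) ⊆ [m]`: representatives in `[m]` (0-based) of
`{f b mod m : b < a and f b ≥ a}`. -/
def necklaceI (m : ℕ) (f : ℤ → ℤ) (a : ℤ) : Finset (Fin m) :=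
  univ.filter fun x => ∃ b : ℤ, b < a ∧ a ≤ f b ∧ f b % (m:ℤ) = ((x:ℕ):ℤ)

/-- The dual necklace subset `J_a(f) ⊆ [m]`: representatives in `[m]` (0-based) of
`{b mod m : b < a and f b ≥ a}`. -/
def necklaceJ (m : ℕ) (f : ℤ → ℤ) (a : ℤ) : Finset (Fin m) :=
  univ.filter fun x => ∃ b : ℤ, b < a ∧ a ≤ f b ∧ b % (m:ℤ) = ((x:ℕ):ℤ)

/-- Dominance order on `k`-element subsets of `Fin m`:
the `r`-th smallest element of `I` is at most the `r`-th smallest element of `J`. -/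
def domLE {m : ℕ} (k : ℕ) (I J : Finset (Fin m)) : Prop :=
  ∃ (hI : I.card = k) (hJ : J.card = k),
    ∀ r : Fin k, I.orderEmbOfFin hI r ≤ J.orderEmbOfFin hJ r

/-- `a`-shifted dominance order: rotate so that `a` becomes least, then compare. -/
def sdomLE {m : ℕ} (k : ℕ) (a : Fin m) (I J : Finset (Fin m)) : Prop :=
  domLE k (I.image (· - a)) (J.image (· - a))

/-- `a`-shifted lexicographic order on subsets of `Fin m`. -/
def lexLE {m : ℕ} (a : Fin m) (I J : Finset (Fin m)) : Prop :=
  I = J ∨ List.Lex (· < ·) ((I.image (· - a)).sort (· ≤ ·)) ((J.image (· - a)).sort (· ≤ ·))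

/-- A Catalan subset of `[2n]` (0-based): an `(n−1)`-subset such that the length-`2n`
word with `U` at positions `{0} ∪ {x+1 : x ∈ I}` and `D` elsewhere is a Dyck path. -/
def IsCatalan {n : ℕ} (I : Finset (Fin (2*n))) : Prop :=
  I.card = n - 1 ∧
  ∀ p : ℕ, p ≤ 2*n →
    p ≤ 2 * ((insert 0 (I.image fun x => (x:ℕ)+1)).filter (· < p)).card

/-- Catalan subset with respect to the shifted order `≤_a`. -/
def IsCatalanAt {n : ℕ} (a : Fin (2*n)) (I : Finset (Fin (2*n))) : Prop :=
  IsCatalan (I.image (· - a))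

/-- The set of maxima of `S` with respect to the `a`-shifted order. -/
def maxAt {m : ℕ} (a : Fin m) (S : Finset (Fin m)) : Finset (Fin m) :=
  S.filter fun x => ∀ y ∈ S, y - a ≤ x - a

/-- `I_a(σ)` for a noncrossing partition `σ`: the complement in `[2n]` of the set of
`≤_a`-maxima of the blocks of `σ` (embedded by `bar`) and of the blocks of the dual
partition `σ̃` (embedded by `til`). -/
def IaP {n : ℕ} (σ : NCP n) (a : Fin (2*n)) : Finset (Fin (2*n)) :=
  univ \ ((σ.parts.biUnion fun B => maxAt a (B.image bar)) ∪
          ((univ : Finset (Fin n)).biUnion fun i =>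
            maxAt a ((univ.filter (dualRel σ i)).image til)))

/-- `I` is concordant with `σ`: `I` has `n−1` elements and every block of `σ` and of
its dual `σ̃` contains exactly one element of `[2n] ∖ I`. -/
def Concordant {n : ℕ} (σ : NCP n) (I : Finset (Fin (2*n))) : Prop :=
  I.card = n - 1 ∧
  (∀ B ∈ σ.parts, ((B.image bar) ∩ (univ \ I)).card = 1) ∧
  (∀ i : Fin n, (((univ.filter (dualRel σ i)).image til) ∩ (univ \ I)).card = 1)

/-- `E(I)`: the set of noncrossing partitions concordant with `I`. -/
def ESet {n : ℕ} (I : Finset (Fin (2*n))) : Set (NCP n) :=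
  {σ | IsNoncrossing σ ∧ Concordant σ I}

/-- The maximal minor `Δ_I(X)` on the columns indexed by `I`, in increasing order. -/
def minorOn {k m : ℕ} (X : Matrix (Fin k) (Fin m) ℝ) (I : Finset (Fin m)) : ℝ :=
  if h : I.card = k then (X.submatrix id fun r => I.orderEmbOfFin h r).det else 0

/-- `X` is totally nonnegative: it has full rank `k` and all maximal minors are `≥ 0`. -/
def IsTNN {k m : ℕ} (X : Matrix (Fin k) (Fin m) ℝ) : Prop :=
  X.rank = k ∧ ∀ I : Finset (Fin m), I.card = k → 0 ≤ minorOn X I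

/-- `t` times the matrix unit `E_{p,q}` (0-based indices). -/
def matE (m : ℕ) (p q : ℕ) (t : ℝ) : Matrix (Fin m) (Fin m) ℝ :=
  Matrix.of fun r s => if (r:ℕ) = p ∧ (s:ℕ) = q then t else 0

/-- `x_i(t) = Id + t·E_{i,i+1}` (1-based index `i`). -/
def xB (m i : ℕ) (t : ℝ) : Matrix (Fin m) (Fin m) ℝ := 1 + matE m (i-1) i t

/-- `y_i(t) = Id + t·E_{i+1,i}` (1-based index `i`). -/
def yB (m i : ℕ) (t : ℝ) : Matrix (Fin m) (Fin m) ℝ := 1 + matE m i (i-1) t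

/-- `u_i(t) = x_i(t)·y_{i−1}(t)` (1-based index `i`). -/
def uB (m i : ℕ) (t : ℝ) : Matrix (Fin m) (Fin m) ℝ := xB m i t * yB m (i-1) t

/-- The columns of `X`, extended `n`-periodically to all integer indices (0-based). -/
def colP {k n : ℕ} (X : Matrix (Fin k) (Fin n) ℝ) (i : ℤ) : Fin k → ℝ :=
  fun r => if h : (i % (n:ℤ)).toNat < n then X r ⟨(i % (n:ℤ)).toNat, h⟩ else 0

/-- `f_X(i) = min { j ≥ i : v_i ∈ span(v_{i+1}, …, v_j) }` (0-based columns). -/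
def fX {k n : ℕ} (X : Matrix (Fin k) (Fin n) ℝ) (i : ℤ) : ℤ :=
  sInf {j : ℤ | i ≤ j ∧ colP X i ∈ Submodule.span ℝ (colP X '' Set.Ioc i j)}

/-- Fintype instance for finite partitions of a finite set. -/
instance {α : Type*} [DecidableEq α] [Fintype α] (s : Finset α) : Fintype (Finpartition s) :=
  Fintype.ofInjective Finpartition.parts fun _ _ h => Finpartition.ext h

/-- The sorted list of (the values of) a subset of `Fin m`. -/
def sortedL {m : ℕ} (I : Finset (Fin m)) : List ℕ :=
  (I.sort (· ≤ ·)).map Fin.val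

/-- The number of inversions of a list (= the number of adjacent transpositions
needed to sort it, when entries are distinct). -/
def invNum (l : List ℕ) : ℕ :=
  ((Finset.range l.length ×ˢ Finset.range l.length).filter fun pq =>
    pq.1 < pq.2 ∧ l.getD pq.2 0 < l.getD pq.1 0).card

/-- The subset of `Fin m` whose values lie in the list `l`. -/
def toFinF {m : ℕ} (l : List ℕ) : Finset (Fin m) :=
  univ.filter fun x => (x:ℕ) ∈ l

/-- The double sum `Σ_{σ ∈ E(l), κ ∈ E(l')} L σ · L κ`, where `E` of a list with a
repeated entry (or an out-of-range entry) is empty. -/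
def pairSum {n : ℕ} (L : NCP n → ℝ) (l l' : List ℕ) : ℝ :=
  if (l.Nodup ∧ ∀ x ∈ l, x < 2*n) ∧ (l'.Nodup ∧ ∀ x ∈ l', x < 2*n) then
    ∑ᶠ σ ∈ ESet (n := n) (toFinF l), ∑ᶠ κ ∈ ESet (n := n) (toFinF l'), L σ * L κ
  else 0

/-- The list obtained from `LI` by replacing its entries at the positions in `S`
(in increasing order of position) by the first `#S` entries of `LJ`. -/
def swapI (LI LJ : List ℕ) (S : Finset ℕ) : List ℕ :=
  (List.range LI.length).map fun p =>
    if p ∈ S then LJ.getD ((S.filter (· < p)).card) 0 else LI.getD p 0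

/-- The list obtained from `LJ` by replacing its first `#S` entries by the entries of
`LI` at the positions in `S`, in increasing order. -/
def swapJ (LI LJ : List ℕ) (S : Finset ℕ) : List ℕ :=
  (List.range LJ.length).map fun p =>
    if p < S.card then LI.getD ((S.sort (· ≤ ·)).getD p 0) 0 else LJ.getD p 0

section CIoc
variable {m : ℕ}

lemma mem_cIoc {a b x : Fin m} :
    x ∈ cIoc a b ↔ (if a < b then a < x ∧ x ≤ b else a < x ∨ x ≤ b) := by
  simp [cIoc]

lemma cIoc_compl {a b : Fin m} (hab : a ≠ b) {x : Fin m} :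
    x ∈ cIoc b a ↔ x ∉ cIoc a b := by
  have hab' : (a : ℕ) ≠ b := fun h => hab (Fin.ext h)
  simp only [mem_cIoc, Fin.lt_def, Fin.le_def]
  split_ifs <;> omega

lemma cIoc_eq_union {i j k : Fin m} (hij : i ≠ j) (hjk : j ≠ k) (hik : i ≠ k)
    (h : j ∈ cIoc i k) : cIoc i k = cIoc i j ∪ cIoc j k := by
  have h1 : (i : ℕ) ≠ j := fun h => hij (Fin.ext h)
  have h2 : (j : ℕ) ≠ k := fun h => hjk (Fin.ext h)
  have h3 : (i : ℕ) ≠ k := fun h => hik (Fin.ext h)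
  ext x
  simp only [mem_cIoc, Fin.lt_def, Fin.le_def, Finset.mem_union] at h ⊢
  split_ifs at h ⊢ <;> omega

lemma cIoc_eq_inter {i j k : Fin m} (hij : i ≠ j) (hjk : j ≠ k) (hik : i ≠ k)
    (h : k ∈ cIoc i j) : cIoc i k = cIoc i j ∩ cIoc j k := by
  have h1 : (i : ℕ) ≠ j := fun h => hij (Fin.ext h)
  have h2 : (j : ℕ) ≠ k := fun h => hjk (Fin.ext h)
  have h3 : (i : ℕ) ≠ k := fun h => hik (Fin.ext h)
  ext x
  simp only [mem_cIoc, Fin.lt_def, Fin.le_def, Finset.mem_inter] at h ⊢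
  split_ifs at h ⊢ <;> omega

lemma cIoc_mem_or {i j k : Fin m} (hij : i ≠ j) (hjk : j ≠ k) (hik : i ≠ k) :
    j ∈ cIoc i k ∨ k ∈ cIoc i j := by
  have h1 : (i : ℕ) ≠ j := fun h => hij (Fin.ext h)
  have h2 : (j : ℕ) ≠ k := fun h => hjk (Fin.ext h)
  have h3 : (i : ℕ) ≠ k := fun h => hik (Fin.ext h)
  simp only [mem_cIoc, Fin.lt_def, Fin.le_def]
  split_ifs <;> omega

end CIoc
section Dual
variable {n : ℕ} {σ : NCP n}

/-- `S` is a union of blocks of `σ`. -/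
def Sat (σ : NCP n) (S : Finset (Fin n)) : Prop :=
  ∀ B ∈ σ.parts, B ⊆ S ∨ ∀ x ∈ B, x ∉ S

lemma Sat.union {S T : Finset (Fin n)} (hS : Sat σ S) (hT : Sat σ T) : Sat σ (S ∪ T) := by
  intro B hB
  rcases hS B hB with h | h
  · exact Or.inl (h.trans Finset.subset_union_left)
  rcases hT B hB with h' | h'
  · exact Or.inl (h'.trans Finset.subset_union_right)
  · exact Or.inr fun x hx hm => (Finset.mem_union.1 hm).elim (h x hx) (h' x hx)

lemma Sat.inter {S T : Finset (Fin n)} (hS : Sat σ S) (hT : Sat σ T) : Sat σ (S ∩ T) := by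
  intro B hB
  rcases hS B hB with h | h
  · rcases hT B hB with h' | h'
    · exact Or.inl (Finset.subset_inter h h')
    · exact Or.inr fun x hx hm => h' x hx (Finset.mem_inter.1 hm).2
  · exact Or.inr fun x hx hm => h x hx (Finset.mem_inter.1 hm).1

lemma dualRel_iff_sat {i j : Fin n} (hij : i ≠ j) :
    dualRel σ i j ↔ Sat σ (cIoc i j) := by
  constructor
  · rintro (rfl | h)
    · exact absurd rfl hij
    · intro B hB
      by_cases h1 : ∃ x ∈ B, x ∈ cIoc i j
      · left
        intro x hx
        by_contra hx'
        obtain ⟨y, hy, hy'⟩ := h1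
        exact h ⟨B, hB, ⟨y, Finset.mem_inter.2 ⟨hy, hy'⟩⟩,
          ⟨x, Finset.mem_inter.2 ⟨hx, (cIoc_compl hij).2 hx'⟩⟩⟩
      · right
        intro x hx hx'
        exact h1 ⟨x, hx, hx'⟩
  · intro hsat
    right
    rintro ⟨B, hB, ⟨y, hy⟩, ⟨x, hx⟩⟩
    rw [Finset.mem_inter] at hy hx
    rcases hsat B hB with h | h
    · exact (cIoc_compl hij).1 hx.2 (h hx.1)
    · exact h y hy.1 hy.2

lemma dualRel_refl (i : Fin n) : dualRel σ i i := Or.inl rfl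

lemma dualRel_symm {i j : Fin n} (h : dualRel σ i j) : dualRel σ j i := by
  rcases h with rfl | h
  · exact Or.inl rfl
  · exact Or.inr fun ⟨B, hB, h1, h2⟩ => h ⟨B, hB, h2, h1⟩

lemma dualRel_trans {i j k : Fin n} (h1 : dualRel σ i j) (h2 : dualRel σ j k) :
    dualRel σ i k := by
  by_cases hij : i = j; · subst hij; exact h2
  by_cases hjk : j = k; · subst hjk; exact h1
  by_cases hik : i = k; · exact hik ▸ dualRel_refl i
  rw [dualRel_iff_sat hij] at h1
  rw [dualRel_iff_sat hjk] at h2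
  rw [dualRel_iff_sat hik]
  rcases cIoc_mem_or hij hjk hik with h | h
  · rw [cIoc_eq_union hij hjk hik h]; exact h1.union h2
  · rw [cIoc_eq_inter hij hjk hik h]; exact h1.inter h2

end Dual
section Blocks
variable {n : ℕ} {σ : NCP n}

lemma mem_part (σ : NCP n) (x : Fin n) : x ∈ σ.part x :=
  Finpartition.mem_part σ (Finset.mem_univ x)

lemma part_mem (σ : NCP n) (x : Fin n) : σ.part x ∈ σ.parts :=
  (Finpartition.part_mem σ).2 (Finset.mem_univ x)

lemma part_eq_of_mem {x : Fin n} {B : Finset (Fin n)} (hB : B ∈ σ.parts) (hx : x ∈ B) :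
    σ.part x = B := Finpartition.part_eq_of_mem σ hB hx

lemma sameBlock_iff {x y : Fin n} : sameBlock σ x y ↔ σ.part x = σ.part y := by
  constructor
  · rintro ⟨B, hB, hx, hy⟩
    rw [part_eq_of_mem hB hx, part_eq_of_mem hB hy]
  · intro h
    exact ⟨σ.part x, part_mem σ x, mem_part σ x, h ▸ mem_part σ y⟩

lemma part_eq_part_of_mem {x y : Fin n} (h : y ∈ σ.part x) : σ.part y = σ.part x :=
  part_eq_of_mem (part_mem σ x) h

/-- The noncrossing property in terms of `part`. -/
lemma noncross {σ : NCP n} (hσ : IsNoncrossing σ) {a b c d : Fin n}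
    (h1 : a < b) (h2 : b < c) (h3 : c < d)
    (hac : σ.part a = σ.part c) (hbd : σ.part b = σ.part d) : σ.part a = σ.part b := by
  have := hσ a b c d h1 h2 h3 (sameBlock_iff.2 hac) (sameBlock_iff.2 hbd)
  exact sameBlock_iff.1 this

/-- `x` is the maximum of its block. -/
def BarMax (σ : NCP n) (x : Fin n) : Prop := ∀ c ∈ σ.part x, c ≤ x

/-- `x` is the minimum of its block. -/
def BlockMin (σ : NCP n) (x : Fin n) : Prop := ∀ c ∈ σ.part x, x ≤ c

/-- `x` is the maximum of its dual block. -/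
def TilMax (σ : NCP n) (x : Fin n) : Prop := ∀ c, dualRel σ x c → c ≤ x

/-- `x` is dual-related to something larger. -/
def NotMaxD (σ : NCP n) (x : Fin n) : Prop := ∃ j, x < j ∧ dualRel σ x j

lemma tilMax_iff_not_notMaxD {x : Fin n} : TilMax σ x ↔ ¬ NotMaxD σ x := by
  constructor
  · rintro h ⟨j, hj, hrel⟩
    exact absurd (h j hrel) (not_le.2 hj)
  · intro h c hc
    by_contra hcx
    exact h ⟨c, not_le.1 hcx, hc⟩

end Blocks
section L1
variable {n : ℕ} {σ : NCP n}

lemma notMaxD_of_blockMin {i : Fin n} (h : (i:ℕ)+1 < n) (hσ : IsNoncrossing σ)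
    (hmin : BlockMin σ ⟨(i:ℕ)+1, h⟩) : NotMaxD σ i := by
  set i' : Fin n := ⟨(i:ℕ)+1, h⟩ with hi'
  have hi'B : i' ∈ σ.part i' := mem_part σ i'
  have hBne : (σ.part i').Nonempty := ⟨i', hi'B⟩
  set j : Fin n := (σ.part i').max' hBne with hj
  have hjB : j ∈ σ.part i' := Finset.max'_mem _ _
  have hij : i < j := by
    have := hmin j hjB
    simp only [Fin.lt_def, Fin.le_def] at this ⊢
    have h' : ((⟨(i:ℕ)+1, h⟩ : Fin n) : ℕ) = (i:ℕ)+1 := rfl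
    omega
  have hijne : i ≠ j := ne_of_lt hij
  have hpartj : σ.part j = σ.part i' := part_eq_part_of_mem hjB
  refine ⟨j, hij, Or.inr ?_⟩
  rintro ⟨C, hC, ⟨x, hx⟩, ⟨y, hy⟩⟩
  rw [Finset.mem_inter] at hx hy
  obtain ⟨hxC, hxI⟩ := hx
  obtain ⟨hyC, hyI⟩ := hy
  rw [mem_cIoc, if_pos hij] at hxI
  rw [mem_cIoc] at hyI
  rw [if_neg (not_lt.2 hij.le)] at hyI
  have hxval : (i:ℕ) < x ∧ (x:ℕ) ≤ j := ⟨hxI.1, hxI.2⟩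
  have hCx : σ.part x = C := part_eq_of_mem hC hxC
  have hyB : y ∈ σ.part i' → False := by
    intro hyB
    have h1 := hmin y hyB
    have h2 := Finset.le_max' _ y hyB
    rcases hyI with h' | h'
    · rw [Fin.lt_def] at h'; rw [Fin.le_def] at h2; omega
    · rw [Fin.le_def] at h' h1; simp only [hi'] at h1; omega
  -- case x = i' or x = j : C = part i'
  by_cases hxi' : x = i'
  · have hCB : C = σ.part i' := by rw [← hCx, hxi']
    exact hyB (hCB ▸ hyC)
  by_cases hxj : x = j
  · have hCB : C = σ.part i' := by rw [← hCx, hxj, hpartj]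
    exact hyB (hCB ▸ hyC)
  -- now i' < x < j
  have hx1 : i' < x := by
    rw [Fin.lt_def]
    have : (i':ℕ) ≠ (x:ℕ) := fun hh => hxi' (Fin.ext hh.symm)
    simp only [hi'] at this ⊢
    omega
  have hx2 : x < j := by
    rw [Fin.lt_def]
    have : (x:ℕ) ≠ (j:ℕ) := fun hh => hxj (Fin.ext hh)
    rw [Fin.le_def] at hxI
    omega
  have hCy : σ.part y = C := part_eq_of_mem hC hyC
  rcases hyI with h' | h'
  · -- j < y : use (i', x, j, y)
    have := noncross hσ hx1 hx2 h' hpartj.symm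
      (hCx.trans hCy.symm)
    -- σ.part i' = σ.part x
    have hCB : C = σ.part i' := hCx ▸ this.symm
    exact hyB (hCB ▸ hyC)
  · -- y ≤ i : use (y, i', x, j)
    have hyi' : y < i' := by rw [Fin.lt_def]; rw [Fin.le_def] at h'; simp only [hi']; omega
    have := noncross hσ hyi' hx1 hx2 (hCy.trans hCx.symm)
      hpartj.symm
    -- σ.part y = σ.part i'
    have : y ∈ σ.part i' := this ▸ mem_part σ y
    exact hyB this

lemma blockMin_of_notMaxD {i : Fin n} (h : NotMaxD σ i) :
    ∃ hlt : (i:ℕ)+1 < n, BlockMin σ ⟨(i:ℕ)+1, hlt⟩ := by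
  obtain ⟨j, hij, hrel⟩ := h
  have hlt : (i:ℕ)+1 < n := by
    have := j.isLt
    rw [Fin.lt_def] at hij
    omega
  refine ⟨hlt, ?_⟩
  set i' : Fin n := ⟨(i:ℕ)+1, hlt⟩ with hi'
  intro c hc
  by_contra hci
  have hci' : (c:ℕ) ≤ i := by
    rw [Fin.le_def] at hci; simp only [hi'] at hci; omega
  rcases hrel with rfl | hrel
  · exact absurd hij (lt_irrefl _)
  apply hrel
  refine ⟨σ.part i', part_mem σ i', ⟨i', Finset.mem_inter.2 ⟨mem_part σ i', ?_⟩⟩,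
    ⟨c, Finset.mem_inter.2 ⟨hc, ?_⟩⟩⟩
  · rw [mem_cIoc, if_pos hij]
    constructor
    · rw [Fin.lt_def]; simp [hi']
    · rw [Fin.le_def]; simp only [hi']; rw [Fin.lt_def] at hij; omega
  · rw [mem_cIoc, if_neg (not_lt.2 hij.le)]
    exact Or.inr (by rw [Fin.le_def]; omega)

lemma notMaxD_iff (hσ : IsNoncrossing σ) {i : Fin n} :
    NotMaxD σ i ↔ ∃ hlt : (i:ℕ)+1 < n, BlockMin σ ⟨(i:ℕ)+1, hlt⟩ :=
  ⟨blockMin_of_notMaxD, fun ⟨hlt, hmin⟩ => notMaxD_of_blockMin hlt hσ hmin⟩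

end L1
section MSdef
variable {n : ℕ} {σ : NCP n}

lemma fin_sub_zero {m : ℕ} (z0 x : Fin m) (hz : (z0:ℕ) = 0) : x - z0 = x := by
  cases m with
  | zero => exact x.elim0
  | succ m =>
    apply Fin.ext
    rw [Fin.sub_def]
    simp only [hz, Nat.sub_zero]
    rw [Nat.add_mod_left, Nat.mod_eq_of_lt x.isLt]

lemma mem_maxAt_zero {m : ℕ} {z0 : Fin m} (hz : (z0:ℕ) = 0) {S : Finset (Fin m)} {x : Fin m} :
    x ∈ maxAt z0 S ↔ x ∈ S ∧ ∀ y ∈ S, y ≤ x := by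
  simp only [maxAt, Finset.mem_filter]
  constructor
  · rintro ⟨h1, h2⟩
    exact ⟨h1, fun y hy => by have := h2 y hy; rwa [fin_sub_zero z0 y hz, fin_sub_zero z0 x hz] at this⟩
  · rintro ⟨h1, h2⟩
    exact ⟨h1, fun y hy => by rw [fin_sub_zero z0 y hz, fin_sub_zero z0 x hz]; exact h2 y hy⟩

end MSdef
section MS2
variable {n : ℕ} {σ : NCP n}

lemma bar_le_bar {a b : Fin n} : bar a ≤ bar b ↔ a ≤ b := by
  simp only [bar, Fin.le_def]; omega

lemma til_le_til {a b : Fin n} : til a ≤ til b ↔ a ≤ b := by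
  simp only [til, Fin.le_def]; omega

lemma bar_inj {a b : Fin n} (h : bar a = bar b) : a = b := by
  have := congrArg Fin.val h
  simp only [bar] at this
  exact Fin.ext (by omega)

lemma til_inj {a b : Fin n} (h : til a = til b) : a = b := by
  have := congrArg Fin.val h
  simp only [til] at this
  exact Fin.ext (by omega)

lemma bar_ne_til (a b : Fin n) : bar a ≠ til b := by
  intro h
  have := congrArg Fin.val h
  simp only [bar, til] at this
  omega

/-- The complement of `IaP σ a` : the union of bar-maxima and til-maxima. -/
def MS (σ : NCP n) (a : Fin (2*n)) : Finset (Fin (2*n)) :=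
  (σ.parts.biUnion fun B => maxAt a (B.image bar)) ∪
  ((univ : Finset (Fin n)).biUnion fun i =>
    maxAt a ((univ.filter (dualRel σ i)).image til))

lemma IaP_eq (σ : NCP n) (a : Fin (2*n)) : IaP σ a = univ \ MS σ a := rfl

lemma MS_subset (σ : NCP n) (a : Fin (2*n)) : MS σ a ⊆ univ := Finset.subset_univ _

lemma compl_IaP (σ : NCP n) (a : Fin (2*n)) : univ \ IaP σ a = MS σ a := by
  rw [IaP_eq, Finset.sdiff_sdiff_self_left, Finset.univ_inter]

variable {z0 : Fin (2*n)} (hz : (z0:ℕ) = 0)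

include hz in
lemma mem_MS {x : Fin (2*n)} :
    x ∈ MS σ z0 ↔ (∃ b, x = bar b ∧ BarMax σ b) ∨ (∃ b, x = til b ∧ TilMax σ b) := by
  simp only [MS, Finset.mem_union, Finset.mem_biUnion, mem_maxAt_zero hz]
  constructor
  · rintro (⟨B, hB, hx, hmax⟩ | ⟨i, _, hx, hmax⟩)
    · rw [Finset.mem_image] at hx
      obtain ⟨b, hb, rfl⟩ := hx
      refine Or.inl ⟨b, rfl, ?_⟩
      intro c hc
      rw [part_eq_of_mem hB hb] at hc
      exact bar_le_bar.1 (hmax (bar c) (Finset.mem_image_of_mem bar hc))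
    · rw [Finset.mem_image] at hx
      obtain ⟨b, hb, rfl⟩ := hx
      rw [Finset.mem_filter] at hb
      refine Or.inr ⟨b, rfl, ?_⟩
      intro c hc
      have hic : dualRel σ i c := dualRel_trans hb.2 hc
      exact til_le_til.1 (hmax (til c)
        (Finset.mem_image_of_mem til (Finset.mem_filter.2 ⟨Finset.mem_univ c, hic⟩)))
  · rintro (⟨b, rfl, hmax⟩ | ⟨b, rfl, hmax⟩)
    · refine Or.inl ⟨σ.part b, part_mem σ b, Finset.mem_image_of_mem bar (mem_part σ b), ?_⟩
      intro y hy
      rw [Finset.mem_image] at hy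
      obtain ⟨c, hc, rfl⟩ := hy
      exact bar_le_bar.2 (hmax c hc)
    · refine Or.inr ⟨b, Finset.mem_univ b,
        Finset.mem_image_of_mem til (Finset.mem_filter.2 ⟨Finset.mem_univ b, dualRel_refl b⟩), ?_⟩
      intro y hy
      rw [Finset.mem_image] at hy
      obtain ⟨c, hc, rfl⟩ := hy
      rw [Finset.mem_filter] at hc
      exact til_le_til.2 (hmax c hc.2)

include hz in
lemma MS_eq : MS σ z0 =
    (univ.filter (BarMax σ)).image bar ∪ (univ.filter (TilMax σ)).image til := by
  ext x
  rw [mem_MS hz]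
  simp only [Finset.mem_union, Finset.mem_image, Finset.mem_filter, Finset.mem_univ, true_and]
  constructor
  · rintro (⟨b, rfl, h⟩ | ⟨b, rfl, h⟩)
    · exact Or.inl ⟨b, h, rfl⟩
    · exact Or.inr ⟨b, h, rfl⟩
  · rintro (⟨b, h, rfl⟩ | ⟨b, h, rfl⟩)
    · exact Or.inl ⟨b, rfl, h⟩
    · exact Or.inr ⟨b, rfl, h⟩

end MS2
section Cards
variable {n : ℕ} {σ : NCP n}

lemma card_barMax : (univ.filter (BarMax σ)).card = σ.parts.card := by
  apply Finset.card_bij (fun b _ => σ.part b)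
  · intro b _; exact part_mem σ b
  · intro b1 h1 b2 h2 heq
    rw [Finset.mem_filter] at h1 h2
    have hb1 : b1 ∈ σ.part b2 := heq ▸ mem_part σ b1
    have hb2 : b2 ∈ σ.part b1 := heq ▸ mem_part σ b2
    exact le_antisymm (h2.2 b1 hb1) (h1.2 b2 hb2)
  · intro B hB
    have hne := σ.nonempty_of_mem_parts hB
    refine ⟨B.max' hne, Finset.mem_filter.2 ⟨Finset.mem_univ _, ?_⟩, ?_⟩
    · intro c hc
      rw [part_eq_of_mem hB (Finset.max'_mem B hne)] at hc
      exact Finset.le_max' B c hc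
    · exact part_eq_of_mem hB (Finset.max'_mem B hne)

lemma card_blockMin : (univ.filter (BlockMin σ)).card = σ.parts.card := by
  apply Finset.card_bij (fun b _ => σ.part b)
  · intro b _; exact part_mem σ b
  · intro b1 h1 b2 h2 heq
    rw [Finset.mem_filter] at h1 h2
    have hb1 : b1 ∈ σ.part b2 := heq ▸ mem_part σ b1
    have hb2 : b2 ∈ σ.part b1 := heq ▸ mem_part σ b2
    exact le_antisymm (h1.2 b2 hb2) (h2.2 b1 hb1)
  · intro B hB
    have hne := σ.nonempty_of_mem_parts hB
    refine ⟨B.min' hne, Finset.mem_filter.2 ⟨Finset.mem_univ _, ?_⟩, ?_⟩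
    · intro c hc
      rw [part_eq_of_mem hB (Finset.min'_mem B hne)] at hc
      exact Finset.min'_le B c hc
    · exact part_eq_of_mem hB (Finset.min'_mem B hne)

lemma parts_card_pos (hn : 0 < n) : 0 < σ.parts.card :=
  Finset.card_pos.2 ⟨σ.part ⟨0, hn⟩, part_mem σ ⟨0, hn⟩⟩

lemma parts_card_le (hn : 0 < n) : σ.parts.card ≤ n := by
  rw [← card_blockMin (σ := σ)]
  calc (univ.filter (BlockMin σ)).card ≤ (univ : Finset (Fin n)).card :=
        Finset.card_le_card (Finset.filter_subset _ _)
    _ = n := by simp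

lemma card_notMaxD (hn : 0 < n) (hσ : IsNoncrossing σ) :
    (univ.filter (NotMaxD σ)).card = σ.parts.card - 1 := by
  have h0 : (⟨0, hn⟩ : Fin n) ∈ univ.filter (BlockMin σ) := by
    refine Finset.mem_filter.2 ⟨Finset.mem_univ _, fun c _ => ?_⟩
    simp [Fin.le_def]
  rw [← card_blockMin (σ := σ), ← Finset.card_erase_of_mem h0]
  apply Finset.card_bij (fun (i : Fin n) (_ : i ∈ univ.filter (NotMaxD σ)) => if h : (i:ℕ)+1 < n then (⟨(i:ℕ)+1, h⟩ : Fin n) else i)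
  · intro i hi
    rw [Finset.mem_filter] at hi
    obtain ⟨hlt, hmin⟩ := (notMaxD_iff hσ).1 hi.2
    rw [dif_pos hlt]
    refine Finset.mem_erase.2 ⟨?_, Finset.mem_filter.2 ⟨Finset.mem_univ _, hmin⟩⟩
    intro h
    have := congrArg Fin.val h
    simp at this
  · intro i1 h1 i2 h2 heq
    rw [Finset.mem_filter] at h1 h2
    obtain ⟨hlt1, _⟩ := (notMaxD_iff hσ).1 h1.2
    obtain ⟨hlt2, _⟩ := (notMaxD_iff hσ).1 h2.2
    rw [dif_pos hlt1, dif_pos hlt2] at heq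
    have := congrArg Fin.val heq
    simp only at this
    exact Fin.ext (by omega)
  · intro x hx
    rw [Finset.mem_erase, Finset.mem_filter] at hx
    obtain ⟨hx0, _, hxmin⟩ := hx
    have hxv : 0 < (x:ℕ) := by
      rcases Nat.eq_zero_or_pos (x:ℕ) with h | h
      · exact absurd (Fin.ext h) hx0
      · exact h
    have hlt : (x:ℕ)-1+1 < n := by have := x.isLt; omega
    refine ⟨⟨(x:ℕ)-1, by omega⟩, ?_, ?_⟩
    · refine Finset.mem_filter.2 ⟨Finset.mem_univ _, (notMaxD_iff hσ).2 ⟨hlt, ?_⟩⟩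
      have : (⟨(x:ℕ)-1+1, hlt⟩ : Fin n) = x := Fin.ext (by simp; omega)
      rw [this]; exact hxmin
    · rw [dif_pos hlt]
      exact Fin.ext (by simp; omega)

lemma card_tilMax (hn : 0 < n) (hσ : IsNoncrossing σ) :
    (univ.filter (TilMax σ)).card = n - (σ.parts.card - 1) := by
  have : univ.filter (TilMax σ) = univ \ univ.filter (NotMaxD σ) := by
    ext x
    simp only [Finset.mem_filter, Finset.mem_sdiff, Finset.mem_univ, true_and]
    exact tilMax_iff_not_notMaxD
  rw [this, Finset.card_sdiff_of_subset (Finset.filter_subset _ _), card_notMaxD hn hσ]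
  simp

variable {z0 : Fin (2*n)} (hz : (z0:ℕ) = 0)

include hz in
lemma card_MS (hn : 0 < n) (hσ : IsNoncrossing σ) : (MS σ z0).card = n + 1 := by
  rw [MS_eq hz]
  rw [Finset.card_union_of_disjoint, Finset.card_image_of_injective _ (fun a b => bar_inj),
    Finset.card_image_of_injective _ (fun a b => til_inj), card_barMax, card_tilMax hn hσ]
  · have h1 := parts_card_pos (σ := σ) hn
    have h2 := parts_card_le (σ := σ) hn
    omega
  · rw [Finset.disjoint_left]
    rintro x hx1 hx2
    rw [Finset.mem_image] at hx1 hx2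
    obtain ⟨a, _, rfl⟩ := hx1
    obtain ⟨b, _, hb⟩ := hx2
    exact bar_ne_til a b hb.symm

include hz in
lemma card_IaP (hn : 0 < n) (hσ : IsNoncrossing σ) : (IaP σ z0).card = n - 1 := by
  rw [IaP_eq, Finset.card_sdiff_of_subset (MS_subset σ z0), card_MS hz hn hσ]
  simp only [Finset.card_univ, Fintype.card_fin]
  omega

end Cards
section PartA
variable {n : ℕ} {σ : NCP n} {z0 : Fin (2*n)} (hz : (z0:ℕ) = 0)

include hz in
lemma bar_inter_MS {B : Finset (Fin n)} (hB : B ∈ σ.parts) (hne : B.Nonempty) :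
    (B.image bar) ∩ MS σ z0 = {bar (B.max' hne)} := by
  ext x
  rw [Finset.mem_inter, Finset.mem_singleton]
  constructor
  · rintro ⟨hx1, hx2⟩
    rw [Finset.mem_image] at hx1
    obtain ⟨c, hc, rfl⟩ := hx1
    rcases (mem_MS hz).1 hx2 with ⟨b, hb, hmax⟩ | ⟨b, hb, _⟩
    · have hcb : c = b := bar_inj hb
      subst hcb
      congr 1
      have hpart : σ.part c = B := part_eq_of_mem hB hc
      apply le_antisymm
      · exact Finset.le_max' B c hc
      · exact hmax _ (hpart ▸ Finset.max'_mem B hne)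
    · exact absurd hb (bar_ne_til _ _)
  · rintro rfl
    refine ⟨Finset.mem_image_of_mem bar (Finset.max'_mem B hne), (mem_MS hz).2 (Or.inl ⟨_, rfl, ?_⟩)⟩
    intro c hc
    rw [part_eq_of_mem hB (Finset.max'_mem B hne)] at hc
    exact Finset.le_max' B c hc

include hz in
lemma til_inter_MS (i : Fin n) :
    ((univ.filter (dualRel σ i)).image til) ∩ MS σ z0 =
      {til ((univ.filter (dualRel σ i)).max' ⟨i, Finset.mem_filter.2 ⟨Finset.mem_univ i, dualRel_refl i⟩⟩)} := by
  set D := univ.filter (dualRel σ i) with hD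
  have hne : D.Nonempty := ⟨i, Finset.mem_filter.2 ⟨Finset.mem_univ i, dualRel_refl i⟩⟩
  have hmaxD : D.max' hne ∈ D := Finset.max'_mem D hne
  have hiM : dualRel σ i (D.max' hne) := (Finset.mem_filter.1 hmaxD).2
  ext x
  rw [Finset.mem_inter, Finset.mem_singleton]
  constructor
  · rintro ⟨hx1, hx2⟩
    rw [Finset.mem_image] at hx1
    obtain ⟨c, hc, rfl⟩ := hx1
    have hic : dualRel σ i c := (Finset.mem_filter.1 hc).2
    rcases (mem_MS hz).1 hx2 with ⟨b, hb, _⟩ | ⟨b, hb, hmax⟩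
    · exact absurd hb.symm (bar_ne_til _ _)
    · have hcb : c = b := til_inj hb
      subst hcb
      congr 1
      apply le_antisymm
      · exact Finset.le_max' D c hc
      · exact hmax _ (dualRel_trans (dualRel_symm hic) hiM)
  · rintro rfl
    refine ⟨Finset.mem_image_of_mem til hmaxD, (mem_MS hz).2 (Or.inr ⟨_, rfl, ?_⟩)⟩
    intro c hc
    exact Finset.le_max' D c (Finset.mem_filter.2 ⟨Finset.mem_univ c, dualRel_trans hiM hc⟩)

include hz in
lemma concordant_self (hn : 0 < n) (hσ : IsNoncrossing σ) : Concordant σ (IaP σ z0) := by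
  refine ⟨card_IaP hz hn hσ, ?_, ?_⟩
  · intro B hB
    rw [compl_IaP, bar_inter_MS hz hB (σ.nonempty_of_mem_parts hB), Finset.card_singleton]
  · intro i
    rw [compl_IaP, til_inter_MS hz i, Finset.card_singleton]

end PartA
section Dom
variable {m k : ℕ}

lemma mem_of_emb {I : Finset (Fin m)} (hI : I.card = k) {x : Fin m} (hx : x ∈ I) :
    ∃ s : Fin k, I.orderEmbOfFin hI s = x := by
  have : (x : Fin m) ∈ Set.range (I.orderEmbOfFin hI) := by
    rw [Finset.range_orderEmbOfFin]; exact_mod_cast hx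
  exact this

lemma domLE_of_counts {I J : Finset (Fin m)} (hI : I.card = k) (hJ : J.card = k)
    (h : ∀ t, (J.filter (· ≤ t)).card ≤ (I.filter (· ≤ t)).card) : domLE k I J := by
  refine ⟨hI, hJ, fun r => ?_⟩
  by_contra hc
  push_neg at hc
  set ir := I.orderEmbOfFin hI r
  set jr := J.orderEmbOfFin hJ r
  have hA : (I.filter (· ≤ jr)).card ≤ (r:ℕ) := by
    have hsub : I.filter (· ≤ jr) ⊆ (Finset.Iio r).image (I.orderEmbOfFin hI) := by
      intro x hx
      rw [Finset.mem_filter] at hx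
      obtain ⟨s, hs⟩ := mem_of_emb hI hx.1
      refine Finset.mem_image.2 ⟨s, Finset.mem_Iio.2 ?_, hs⟩
      have : I.orderEmbOfFin hI s < ir := lt_of_le_of_lt (hs.symm ▸ hx.2) hc
      exact (OrderEmbedding.lt_iff_lt _).1 this
    calc (I.filter (· ≤ jr)).card ≤ ((Finset.Iio r).image (I.orderEmbOfFin hI)).card :=
          Finset.card_le_card hsub
      _ = (Finset.Iio r).card := Finset.card_image_of_injective _ (I.orderEmbOfFin hI).injective
      _ = (r:ℕ) := Fin.card_Iio r
  have hB : (r:ℕ) + 1 ≤ (J.filter (· ≤ jr)).card := by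
    have hsub : (Finset.Iic r).image (J.orderEmbOfFin hJ) ⊆ J.filter (· ≤ jr) := by
      intro x hx
      rw [Finset.mem_image] at hx
      obtain ⟨s, hs, rfl⟩ := hx
      refine Finset.mem_filter.2 ⟨Finset.orderEmbOfFin_mem J hJ s, ?_⟩
      exact (J.orderEmbOfFin hJ).monotone (Finset.mem_Iic.1 hs)
    calc (r:ℕ) + 1 = (Finset.Iic r).card := (Fin.card_Iic r).symm
      _ = ((Finset.Iic r).image (J.orderEmbOfFin hJ)).card :=
          (Finset.card_image_of_injective _ (J.orderEmbOfFin hJ).injective).symm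
      _ ≤ (J.filter (· ≤ jr)).card := Finset.card_le_card hsub
  have := h jr
  omega

lemma filter_card_split (S : Finset (Fin m)) (p : Fin m → Prop) :
    ((univ : Finset (Fin m)).filter p).card = (S.filter p).card + ((univ \ S).filter p).card := by
  rw [← Finset.card_union_of_disjoint, ← Finset.filter_union,
    Finset.union_sdiff_of_subset (Finset.subset_univ S)]
  exact Finset.disjoint_filter_filter Finset.disjoint_sdiff

lemma counts_flip {S T : Finset (Fin m)} (hST : S.card = T.card)
    (h : ∀ t, (S.filter (· ≤ t)).card ≤ (T.filter (· ≤ t)).card) (t : Fin m) :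
    ((univ \ T).filter (· ≤ t)).card ≤ ((univ \ S).filter (· ≤ t)).card := by
  have key : ∀ W : Finset (Fin m),
      (W.filter (· ≤ t)).card + ((univ \ W).filter (· ≤ t)).card =
        ((univ : Finset (Fin m)).filter (· ≤ t)).card := by
    intro W
    rw [← Finset.card_union_of_disjoint (Finset.disjoint_filter_filter Finset.disjoint_sdiff),
      ← Finset.filter_union, Finset.union_sdiff_of_subset (Finset.subset_univ W)]
  have h1 := key S
  have h2 := key T
  have h3 := h t
  omega

lemma image_emb_eq {I : Finset (Fin m)} (hI : I.card = k) :
    (univ : Finset (Fin k)).image (I.orderEmbOfFin hI) = I := by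
  apply Finset.coe_injective
  rw [Finset.coe_image, Finset.coe_univ, Set.image_univ, Finset.range_orderEmbOfFin]

lemma sum_lt_of_domLE {I J : Finset (Fin m)} (h : domLE k I J) (hne : I ≠ J) :
    ∑ x ∈ I, (x:ℕ) < ∑ x ∈ J, (x:ℕ) := by
  obtain ⟨hI, hJ, hle⟩ := h
  have hsum1 : ∑ x ∈ I, (x:ℕ) = ∑ r : Fin k, ((I.orderEmbOfFin hI r : Fin m) : ℕ) := by
    have h0 := Finset.sum_image (s := (univ : Finset (Fin k))) (g := I.orderEmbOfFin hI)
      (f := fun x : Fin m => (x:ℕ))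
      (fun a _ b _ hab => (I.orderEmbOfFin hI).injective hab)
    rw [image_emb_eq hI] at h0
    simpa using h0
  have hsum2 : ∑ x ∈ J, (x:ℕ) = ∑ r : Fin k, ((J.orderEmbOfFin hJ r : Fin m) : ℕ) := by
    have h0 := Finset.sum_image (s := (univ : Finset (Fin k))) (g := J.orderEmbOfFin hJ)
      (f := fun x : Fin m => (x:ℕ))
      (fun a _ b _ hab => (J.orderEmbOfFin hJ).injective hab)
    rw [image_emb_eq hJ] at h0
    simpa using h0
  rw [hsum1, hsum2]
  have hex : ∃ r : Fin k, I.orderEmbOfFin hI r ≠ J.orderEmbOfFin hJ r := by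
    by_contra hc
    push_neg at hc
    apply hne
    rw [← image_emb_eq hI, ← image_emb_eq hJ]
    exact Finset.image_congr fun a _ => hc a
  obtain ⟨r, hr⟩ := hex
  apply Finset.sum_lt_sum
  · intro i _
    exact hle i
  · refine ⟨r, Finset.mem_univ r, ?_⟩
    have h1 : I.orderEmbOfFin hI r < J.orderEmbOfFin hJ r := lt_of_le_of_ne (hle r) hr
    exact h1

end Dom
section PartB1

/-- Pick an element of `S`, with default `d`. -/
def pick {α : Type*} [LinearOrder α] (S : Finset α) (d : α) : α :=
  if h : S.Nonempty then S.min' h else d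

lemma pick_mem {α : Type*} [LinearOrder α] {S : Finset α} (h : S.Nonempty) (d : α) :
    pick S d ∈ S := by
  rw [pick, dif_pos h]; exact Finset.min'_mem S h

variable {n : ℕ} {σ κ : NCP n} {z0 : Fin (2*n)} (hz : (z0:ℕ) = 0)

lemma half_lt (x : Fin (2*n)) : (x:ℕ)/2 < n := by have := x.isLt; omega

/-- The comparison map from `MS σ` to `MS κ`. -/
def cmpMap (σ κ : NCP n) (z0 : Fin (2*n)) : Fin (2*n) → Fin (2*n) := fun x =>
  if (x:ℕ) % 2 = 0 then
    pick ((σ.part ⟨(x:ℕ)/2, half_lt x⟩).image bar ∩ MS κ z0) x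
  else
    pick (((univ.filter (dualRel σ ⟨(x:ℕ)/2, half_lt x⟩)).image til) ∩ MS κ z0) x

lemma bar_val (b : Fin n) : ((bar b : Fin (2*n)):ℕ) = 2*(b:ℕ) := rfl
lemma til_val (b : Fin n) : ((til b : Fin (2*n)):ℕ) = 2*(b:ℕ)+1 := rfl

lemma cmpMap_bar (b : Fin n) :
    cmpMap σ κ z0 (bar b) = pick ((σ.part b).image bar ∩ MS κ z0) (bar b) := by
  have h1 : ((bar b : Fin (2*n)):ℕ) % 2 = 0 := by rw [bar_val]; omega
  have h2 : (⟨((bar b : Fin (2*n)):ℕ)/2, half_lt _⟩ : Fin n) = b := by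
    apply Fin.ext
    show ((bar b : Fin (2*n)):ℕ)/2 = (b:ℕ)
    rw [bar_val]; omega
  rw [cmpMap, if_pos h1, h2]

lemma cmpMap_til (b : Fin n) :
    cmpMap σ κ z0 (til b) =
      pick (((univ.filter (dualRel σ b)).image til) ∩ MS κ z0) (til b) := by
  have h1 : ¬ ((til b : Fin (2*n)):ℕ) % 2 = 0 := by rw [til_val]; omega
  have h2 : (⟨((til b : Fin (2*n)):ℕ)/2, half_lt _⟩ : Fin n) = b := by
    apply Fin.ext
    show ((til b : Fin (2*n)):ℕ)/2 = (b:ℕ)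
    rw [til_val]; omega
  rw [cmpMap, if_neg h1, h2]

lemma cmpMap_spec_bar (hc : Concordant σ (IaP κ z0)) {b : Fin n} (hb : BarMax σ b) :
    cmpMap σ κ z0 (bar b) ∈ MS κ z0 ∧
      ∃ c ∈ σ.part b, cmpMap σ κ z0 (bar b) = bar c := by
  have hcard := hc.2.1 (σ.part b) (part_mem σ b)
  rw [compl_IaP] at hcard
  have hne : ((σ.part b).image bar ∩ MS κ z0).Nonempty :=
    Finset.card_pos.1 (by omega)
  have hmem := pick_mem hne (bar b)
  rw [← cmpMap_bar] at hmem
  rw [Finset.mem_inter] at hmem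
  obtain ⟨h1, h2⟩ := hmem
  rw [Finset.mem_image] at h1
  obtain ⟨c, hcB, hcball⟩ := h1
  exact ⟨h2, c, hcB, hcball.symm⟩

lemma cmpMap_spec_til (hc : Concordant σ (IaP κ z0)) {b : Fin n} (hb : TilMax σ b) :
    cmpMap σ κ z0 (til b) ∈ MS κ z0 ∧
      ∃ c, dualRel σ b c ∧ cmpMap σ κ z0 (til b) = til c := by
  have hcard := hc.2.2 b
  rw [compl_IaP] at hcard
  have hne : (((univ.filter (dualRel σ b)).image til) ∩ MS κ z0).Nonempty :=
    Finset.card_pos.1 (by omega)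
  have hmem := pick_mem hne (til b)
  rw [← cmpMap_til] at hmem
  rw [Finset.mem_inter] at hmem
  obtain ⟨h1, h2⟩ := hmem
  rw [Finset.mem_image] at h1
  obtain ⟨c, hcB, hcball⟩ := h1
  rw [Finset.mem_filter] at hcB
  exact ⟨h2, c, hcB.2, hcball.symm⟩

include hz in
lemma counts_MS_le (hc : Concordant σ (IaP κ z0)) (t : Fin (2*n)) :
    ((MS σ z0).filter (· ≤ t)).card ≤ ((MS κ z0).filter (· ≤ t)).card := by
  apply Finset.card_le_card_of_injOn (cmpMap σ κ z0)
  · intro x hx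
    rw [Finset.mem_coe, Finset.mem_filter] at hx ⊢
    obtain ⟨hx1, hx2⟩ := hx
    rcases (mem_MS hz).1 hx1 with ⟨b, rfl, hmax⟩ | ⟨b, rfl, hmax⟩
    · obtain ⟨hmem, c, hcB, hceq⟩ := cmpMap_spec_bar hc hmax
      refine ⟨hmem, ?_⟩
      calc cmpMap σ κ z0 (bar b) = bar c := hceq
        _ ≤ bar b := bar_le_bar.2 (hmax c hcB)
        _ ≤ t := hx2
    · obtain ⟨hmem, c, hcB, hceq⟩ := cmpMap_spec_til hc hmax
      refine ⟨hmem, ?_⟩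
      calc cmpMap σ κ z0 (til b) = til c := hceq
        _ ≤ til b := til_le_til.2 (hmax c hcB)
        _ ≤ t := hx2
  · intro x1 hx1 x2 hx2 heq
    rw [Finset.coe_filter, Set.mem_setOf_eq] at hx1 hx2
    rcases (mem_MS hz).1 hx1.1 with ⟨b1, rfl, hmax1⟩ | ⟨b1, rfl, hmax1⟩ <;>
      rcases (mem_MS hz).1 hx2.1 with ⟨b2, rfl, hmax2⟩ | ⟨b2, rfl, hmax2⟩
    · -- bar / bar
      obtain ⟨_, c1, hc1, he1⟩ := cmpMap_spec_bar hc hmax1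
      obtain ⟨_, c2, hc2, he2⟩ := cmpMap_spec_bar hc hmax2
      rw [he1, he2] at heq
      have hcc : c1 = c2 := bar_inj heq
      subst hcc
      have hpart : σ.part b1 = σ.part b2 := by
        rw [← part_eq_of_mem (part_mem σ b1) hc1, ← part_eq_of_mem (part_mem σ b2) hc2]
      have hb12 : b1 = b2 := by
        apply le_antisymm
        · exact hmax2 b1 (hpart ▸ mem_part σ b1)
        · exact hmax1 b2 (hpart.symm ▸ mem_part σ b2)
      rw [hb12]
    · -- bar / til : impossible
      obtain ⟨_, c1, hc1, he1⟩ := cmpMap_spec_bar hc hmax1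
      obtain ⟨_, c2, hc2, he2⟩ := cmpMap_spec_til hc hmax2
      rw [he1, he2] at heq
      exact absurd heq (bar_ne_til _ _)
    · -- til / bar : impossible
      obtain ⟨_, c1, hc1, he1⟩ := cmpMap_spec_til hc hmax1
      obtain ⟨_, c2, hc2, he2⟩ := cmpMap_spec_bar hc hmax2
      rw [he1, he2] at heq
      exact absurd heq.symm (bar_ne_til _ _)
    · -- til / til
      obtain ⟨_, c1, hc1, he1⟩ := cmpMap_spec_til hc hmax1
      obtain ⟨_, c2, hc2, he2⟩ := cmpMap_spec_til hc hmax2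
      rw [he1, he2] at heq
      have hcc : c1 = c2 := til_inj heq
      subst hcc
      have hb12 : b1 = b2 := by
        apply le_antisymm
        · exact hmax2 b1 (dualRel_trans hc2 (dualRel_symm hc1))
        · exact hmax1 b2 (dualRel_trans hc1 (dualRel_symm hc2))
      rw [hb12]

include hz in
lemma domLE_IaP (hn : 0 < n) (hσ : IsNoncrossing σ) (hκ : IsNoncrossing κ)
    (hc : Concordant σ (IaP κ z0)) : domLE (n-1) (IaP σ z0) (IaP κ z0) := by
  apply domLE_of_counts (card_IaP hz hn hσ) (card_IaP hz hn hκ)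
  intro t
  rw [IaP_eq, IaP_eq]
  exact counts_flip ((card_MS hz hn hσ).trans (card_MS hz hn hκ).symm)
    (counts_MS_le hz hc) t

end PartB1
section Unique
variable {n : ℕ} {σ κ : NCP n} {z0 : Fin (2*n)} (hz : (z0:ℕ) = 0)

include hz in
lemma mem_MS_bar {b : Fin n} : bar b ∈ MS σ z0 ↔ BarMax σ b := by
  rw [mem_MS hz]
  constructor
  · rintro (⟨b', hb', h⟩ | ⟨b', hb', _⟩)
    · rwa [bar_inj hb']
    · exact absurd hb' (bar_ne_til _ _)
  · intro h; exact Or.inl ⟨b, rfl, h⟩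

include hz in
lemma mem_MS_til {b : Fin n} : til b ∈ MS σ z0 ↔ TilMax σ b := by
  rw [mem_MS hz]
  constructor
  · rintro (⟨b', hb', _⟩ | ⟨b', hb', h⟩)
    · exact absurd hb'.symm (bar_ne_til _ _)
    · rwa [til_inj hb']
  · intro h; exact Or.inr ⟨b, rfl, h⟩

lemma blockMin_transfer (hσ : IsNoncrossing σ) (hκ : IsNoncrossing κ)
    (hF : ∀ b, TilMax σ b ↔ TilMax κ b) (x : Fin n) :
    BlockMin σ x ↔ BlockMin κ x := by
  rcases Nat.eq_zero_or_pos (x:ℕ) with h0 | h0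
  · constructor <;> intro _ c _ <;> (rw [Fin.le_def, h0]; omega)
  · have hlt : ((x:ℕ)-1)+1 < n := by have := x.isLt; omega
    set i : Fin n := ⟨(x:ℕ)-1, by omega⟩ with hi
    have hlt' : (i:ℕ)+1 < n := by simpa [hi] using hlt
    have hxi : (⟨(i:ℕ)+1, hlt'⟩ : Fin n) = x := by
      apply Fin.ext
      show (i:ℕ)+1 = (x:ℕ)
      simp only [hi]
      omega
    have key : ∀ (τ : NCP n), IsNoncrossing τ → (BlockMin τ x ↔ ¬ TilMax τ i) := by
      intro τ hτ
      rw [tilMax_iff_not_notMaxD, not_not, notMaxD_iff hτ]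
      constructor
      · intro h
        exact ⟨hlt', by rwa [hxi]⟩
      · rintro ⟨h1, h2⟩
        have : (⟨(i:ℕ)+1, h1⟩ : Fin n) = (⟨(i:ℕ)+1, hlt'⟩ : Fin n) := rfl
        rw [this, hxi] at h2
        exact h2
    rw [key σ hσ, key κ hκ, hF i]

/-- The minimum of the block containing `z`. -/
def minOf (σ : NCP n) (z : Fin n) : Fin n := (σ.part z).min' ⟨z, mem_part σ z⟩

lemma minOf_mem (σ : NCP n) (z : Fin n) : minOf σ z ∈ σ.part z := Finset.min'_mem _ _

lemma minOf_le {z c : Fin n} (hc : c ∈ σ.part z) : minOf σ z ≤ c := Finset.min'_le _ _ hc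

lemma minOf_le_self (σ : NCP n) (z : Fin n) : minOf σ z ≤ z := minOf_le (mem_part σ z)

lemma part_eq_iff_minOf {x z : Fin n} : σ.part x = σ.part z ↔ minOf σ x = minOf σ z := by
  constructor
  · intro h
    apply le_antisymm
    · exact minOf_le (h ▸ minOf_mem σ z)
    · exact minOf_le (h.symm ▸ minOf_mem σ x)
  · intro h
    have h1 : minOf σ x ∈ σ.part x := minOf_mem σ x
    have h2 : minOf σ x ∈ σ.part z := h ▸ minOf_mem σ z
    rw [← part_eq_of_mem (part_mem σ x) h1, ← part_eq_of_mem (part_mem σ z) h2]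

lemma blockMin_iff_minOf {z : Fin n} : BlockMin σ z ↔ minOf σ z = z := by
  constructor
  · intro h
    exact le_antisymm (minOf_le_self σ z) (h _ (minOf_mem σ z))
  · intro h c hc
    exact h ▸ minOf_le hc

/-- The defining property of `minOf σ z` for non-minimal `z`, in terms of data
determined by `BlockMin`, `BarMax` and earlier values of `minOf`. -/
lemma minOf_spec (hσ : IsNoncrossing σ) {z : Fin n} (hmin : ¬ BlockMin σ z) :
    (minOf σ z < z ∧ BlockMin σ (minOf σ z) ∧
      ¬∃ c, c < z ∧ BarMax σ c ∧ minOf σ c = minOf σ z) ∧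
    ∀ a, (a < z ∧ BlockMin σ a ∧ ¬∃ c, c < z ∧ BarMax σ c ∧ minOf σ c = a) →
      a ≤ minOf σ z := by
  set a0 := minOf σ z with ha0
  have ha0z : σ.part a0 = σ.part z := part_eq_of_mem (part_mem σ z) (minOf_mem σ z)
  have hmin0 : BlockMin σ a0 := by
    intro c hc
    rw [ha0z] at hc
    exact minOf_le hc
  have hm0 : minOf σ a0 = a0 := blockMin_iff_minOf.1 hmin0
  constructor
  · refine ⟨lt_of_le_of_ne (minOf_le_self σ z) fun h => hmin (blockMin_iff_minOf.2 h),
      hmin0, ?_⟩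
    rintro ⟨c, hcz, hcmax, hcmin⟩
    have h1 : σ.part c = σ.part a0 := by
      rw [part_eq_iff_minOf, hcmin, hm0]
    have hzc : z ∈ σ.part c := by rw [h1, ha0z]; exact mem_part σ z
    exact absurd (hcmax z hzc) (not_le.2 hcz)
  · rintro a ⟨haz, hamin, hanoc⟩
    by_contra hcon
    push_neg at hcon
    have hane : σ.part a ≠ σ.part z := by
      intro h
      have h1 : minOf σ a = a0 := part_eq_iff_minOf.1 h
      have h2 : a = a0 := (blockMin_iff_minOf.1 hamin).symm.trans h1
      rw [h2] at hcon
      exact lt_irrefl _ hcon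
    have hene : (σ.part a).Nonempty := ⟨a, mem_part σ a⟩
    set e := (σ.part a).max' hene with he
    have heA : e ∈ σ.part a := Finset.max'_mem _ _
    have hpe : σ.part e = σ.part a := part_eq_of_mem (part_mem σ a) heA
    have hBarMaxe : BarMax σ e := by
      intro c hc
      rw [hpe] at hc
      exact Finset.le_max' _ _ hc
    have hminOfe : minOf σ e = a := by
      rw [part_eq_iff_minOf.1 hpe, blockMin_iff_minOf.1 hamin]
    have hez : ¬ e < z := fun hez => hanoc ⟨e, hez, hBarMaxe, hminOfe⟩
    have hzne : e ≠ z := by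
      intro h
      exact hane ((part_eq_of_mem (part_mem σ a) (h ▸ heA)).symm)
    have hze : z < e := lt_of_le_of_ne (not_lt.1 hez) (Ne.symm hzne)
    have h4 := noncross hσ hcon haz hze ha0z hpe.symm
    exact hane (h4.symm.trans ha0z)

lemma minOf_eq_of_transfer (hσ : IsNoncrossing σ) (hκ : IsNoncrossing κ)
    (hBm : ∀ x, BlockMin σ x ↔ BlockMin κ x)
    (hE : ∀ x, BarMax σ x ↔ BarMax κ x) :
    ∀ z, minOf σ z = minOf κ z := by
  suffices H : ∀ N, ∀ z : Fin n, (z:ℕ) < N → minOf σ z = minOf κ z by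
    exact fun z => H n z z.isLt
  intro N
  induction N with
  | zero => intro z h; omega
  | succ N IH =>
    intro z hzN
    have IHz : ∀ w : Fin n, w < z → minOf σ w = minOf κ w := by
      intro w hw
      rw [Fin.lt_def] at hw
      exact IH w (by omega)
    by_cases hmin : BlockMin σ z
    · rw [blockMin_iff_minOf.1 hmin, blockMin_iff_minOf.1 ((hBm z).1 hmin)]
    · have hmin' : ¬ BlockMin κ z := fun h => hmin ((hBm z).2 h)
      obtain ⟨⟨hσ1, hσ2, hσ3⟩, hσ4⟩ := minOf_spec hσ hmin
      obtain ⟨⟨hκ1, hκ2, hκ3⟩, hκ4⟩ := minOf_spec hκ hmin'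
      apply le_antisymm
      · apply hκ4
        refine ⟨hσ1, (hBm _).1 hσ2, ?_⟩
        rintro ⟨c, hcz, hcmax, hcmin⟩
        exact hσ3 ⟨c, hcz, (hE c).2 hcmax, (IHz c hcz).trans hcmin⟩
      · apply hσ4
        refine ⟨hκ1, (hBm _).2 hκ2, ?_⟩
        rintro ⟨c, hcz, hcmax, hcmin⟩
        exact hκ3 ⟨c, hcz, (hE c).1 hcmax, (IHz c hcz).symm.trans hcmin⟩

lemma eq_of_minOf_eq (hminOf : ∀ z, minOf σ z = minOf κ z) : σ = κ := by
  have hpart : ∀ x, σ.part x = κ.part x := by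
    intro x
    ext y
    have h1 : y ∈ σ.part x ↔ σ.part y = σ.part x :=
      ⟨fun h => part_eq_of_mem (part_mem σ x) h, fun h => h ▸ mem_part σ y⟩
    have h2 : y ∈ κ.part x ↔ κ.part y = κ.part x :=
      ⟨fun h => part_eq_of_mem (part_mem κ x) h, fun h => h ▸ mem_part κ y⟩
    rw [h1, h2, part_eq_iff_minOf, part_eq_iff_minOf, hminOf y, hminOf x]
  apply Finpartition.ext
  ext B
  constructor
  · intro hB
    obtain ⟨x, hx⟩ := σ.nonempty_of_mem_parts hB
    rw [← part_eq_of_mem hB hx, hpart]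
    exact part_mem κ x
  · intro hB
    obtain ⟨x, hx⟩ := κ.nonempty_of_mem_parts hB
    rw [← part_eq_of_mem hB hx, ← hpart]
    exact part_mem σ x

include hz in
lemma eq_of_IaP_eq (hσ : IsNoncrossing σ) (hκ : IsNoncrossing κ)
    (hIaP : IaP σ z0 = IaP κ z0) : σ = κ := by
  have hMS : MS σ z0 = MS κ z0 := by
    rw [← compl_IaP, ← compl_IaP, hIaP]
  have hE : ∀ b, BarMax σ b ↔ BarMax κ b := by
    intro b
    rw [← mem_MS_bar hz, ← mem_MS_bar hz, hMS]
  have hF : ∀ b, TilMax σ b ↔ TilMax κ b := by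
    intro b
    rw [← mem_MS_til hz, ← mem_MS_til hz, hMS]
  exact eq_of_minOf_eq (minOf_eq_of_transfer hσ hκ (blockMin_transfer hσ hκ hF) hE)

end Unique
section Final
variable {n : ℕ} {z0 : Fin (2*n)} (hz : (z0:ℕ) = 0)

include hz in
lemma sum_IaP_strict (hn : 0 < n) {σ κ : NCP n} (hσ : IsNoncrossing σ) (hκ : IsNoncrossing κ)
    (hc : Concordant σ (IaP κ z0)) (hne : σ ≠ κ) :
    ∑ x ∈ IaP σ z0, (x:ℕ) < ∑ x ∈ IaP κ z0, (x:ℕ) :=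
  sum_lt_of_domLE (domLE_IaP hz hn hσ hκ hc) fun h => hne (eq_of_IaP_eq hz hσ hκ h)

include hz in
lemma matrix_isUnit (hn : 0 < n) :
    IsUnit (Matrix.of fun κ σ : {σ : NCP n // IsNoncrossing σ} =>
      if Concordant σ.1 (IaP κ.1 z0) then (1:ℝ) else 0) := by
  set ι := {σ : NCP n // IsNoncrossing σ}
  set A : Matrix ι ι ℝ := Matrix.of fun κ σ : ι =>
    if Concordant σ.1 (IaP κ.1 z0) then (1:ℝ) else 0 with hA
  set wt : ι → ℤ := fun σ => -(∑ x ∈ IaP σ.1 z0, ((x:ℕ):ℤ)) with hwt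
  have key : ∀ κ σ : ι, A κ σ ≠ 0 → σ = κ ∨ wt κ < wt σ := by
    intro κ σ hne0
    have hcon : Concordant σ.1 (IaP κ.1 z0) := by
      by_contra hc
      exact hne0 (by simp [hA, hc])
    by_cases heq : σ = κ
    · exact Or.inl heq
    · right
      have hne' : σ.1 ≠ κ.1 := fun h => heq (Subtype.ext h)
      have := sum_IaP_strict hz hn σ.2 κ.2 hcon hne'
      simp only [hwt, neg_lt_neg_iff]
      have hcast : (∑ x ∈ IaP σ.1 z0, ((x:ℕ):ℤ)) < ∑ x ∈ IaP κ.1 z0, ((x:ℕ):ℤ) := by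
        push_cast
        exact_mod_cast this
      exact hcast
  have hBT : A.BlockTriangular wt := by
    intro i j hij
    by_contra h0
    rcases key i j h0 with rfl | hlt
    · exact lt_irrefl _ hij
    · exact lt_asymm hij hlt
  rw [Matrix.isUnit_iff_isUnit_det, hBT.det]
  have hblock : ∀ a : ℤ, (A.toSquareBlock wt a).det = 1 := by
    intro a
    have hone : A.toSquareBlock wt a = 1 := by
      ext i j
      rcases eq_or_ne i j with rfl | hij
      · have : Concordant i.1.1 (IaP i.1.1 z0) := concordant_self hz hn i.1.2
        simp [Matrix.toSquareBlock_def, Matrix.one_apply, hA, this]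
      · have h0 : A i.1 j.1 = 0 := by
          by_contra h0
          rcases key i.1 j.1 h0 with hj | hlt
          · exact hij (Subtype.ext hj.symm)
          · rw [i.2, j.2] at hlt
            exact lt_irrefl _ hlt
        simp [Matrix.toSquareBlock_def, Matrix.one_apply, hij, h0]
    rw [hone, Matrix.det_one]
  rw [Finset.prod_congr rfl fun a _ => hblock a, Finset.prod_const_one]
  exact isUnit_one

end Final
theorem stmt14 (n : ℕ) (hn : 0 < n) :
    (∀ σ : NCP n, IsNoncrossing σ → Concordant σ (IaP σ ⟨0, by omega⟩)) ∧
    (∀ σ κ : NCP n, IsNoncrossing σ → IsNoncrossing κ →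
      Concordant σ (IaP κ ⟨0, by omega⟩) →
      domLE (n-1) (IaP σ ⟨0, by omega⟩) (IaP κ ⟨0, by omega⟩) ∧
      (IaP σ ⟨0, by omega⟩ = IaP κ ⟨0, by omega⟩ → σ = κ)) ∧
    IsUnit (Matrix.of fun κ σ : {σ : NCP n // IsNoncrossing σ} =>
      if Concordant σ.1 (IaP κ.1 ⟨0, by omega⟩) then (1:ℝ) else 0) := by
  exact ⟨fun σ hσ => concordant_self rfl hn hσ,
    fun σ κ hσ hκ hc => ⟨domLE_IaP rfl hn hσ hκ hc, fun h => eq_of_IaP_eq rfl hσ hκ h⟩,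
    matrix_isUnit rfl hn⟩

end
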